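/- Let G be a quiver and let w : A ⟶ B be a morphism of the free category Paths G, i.e., a path in G of some length n. Then the set of factorizations of w, namely the set of triples (X, u, v) where X is an object, u : A ⟶ X and v : X ⟶ B are morphisms of Paths G with u ≫ v = w, is finite and has exactly n + 1 elements. -/

import Mathlib

open CategoryTheory

universe v u

namespace PathsFactorAux

variable {G : Type u} [Quiver.{v + 1} G]

/-- Split a path at position `i`. -/
def split {A B : G} (w : Quiver.Path A B) (i : ℕ) :
    Σ X : G, Quiver.Path A X × Quiver.Path X B :=
  match w with
  | .nil => ⟨A, .nil, .nil⟩
  | .cons p e =>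
    if i ≤ p.length then
      ⟨(split p i).1, (split p i).2.1, (split p i).2.2.cons e⟩
    else ⟨_, p.cons e, .nil⟩

lemma split_comp {A B : G} (w : Quiver.Path A B) (i : ℕ) :
    (split w i).2.1.comp (split w i).2.2 = w := by
  induction w with
  | nil => rfl
  | cons p e ih =>
    by_cases h : i ≤ p.length
    · simp only [split]; rw [if_pos h]; simp [ih]
    · simp only [split]; rw [if_neg h]; simp

lemma split_length {A B : G} (w : Quiver.Path A B) (i : ℕ) :
    (split w i).2.1.length = min i w.length := by
  induction w with
  | nil => simp [split]
  | cons p e ih =>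
    by_cases h : i ≤ p.length
    · simp only [split]; rw [if_pos h]
      simp only [Quiver.Path.length_cons, ih]; omega
    · simp only [split]; rw [if_neg h]
      simp only [Quiver.Path.length_cons]; omega

lemma split_self {A X : G} (u : Quiver.Path A X) :
    split u u.length = ⟨X, u, .nil⟩ := by
  induction u with
  | nil => rfl
  | cons p e ih => simp [split]

lemma split_spec {A X B : G} (u : Quiver.Path A X) (v : Quiver.Path X B) :
    split (u.comp v) u.length = ⟨X, u, v⟩ := by
  induction v with
  | nil => simpa using split_self u
  | cons q e ih =>
    have hle : u.length ≤ (u.comp q).length := by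
      simp [Quiver.Path.length_comp]
    rw [Quiver.Path.comp_cons]
    simp only [split]
    rw [if_pos hle, ih]

end PathsFactorAux

/-- For a morphism `w : A ⟶ B` of the free category on a quiver `G`, i.e. a path of some
length `n`, the set of factorizations `(X, u, v)` with `u ≫ v = w` is finite and has
exactly `n + 1` elements. -/
theorem paths_factorizations_finite_card {G : Type u} [Quiver.{v + 1} G]
    (A B : Paths G) (w : A ⟶ B) :
    { t : Σ (X : Paths G), (A ⟶ X) × (X ⟶ B) | t.2.1 ≫ t.2.2 = w }.Finite ∧
      Nat.card { t : Σ (X : Paths G), (A ⟶ X) × (X ⟶ B) | t.2.1 ≫ t.2.2 = w } =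
        Quiver.Path.length w + 1 := by
  classical
  set n := Quiver.Path.length w with hn
  let f : Fin (n + 1) → Σ X : Paths G, (A ⟶ X) × (X ⟶ B) :=
    fun i => PathsFactorAux.split (G := G) (A := A) (B := B) w i
  have hlen : ∀ i : Fin (n + 1), Quiver.Path.length (f i).2.1 = min (i : ℕ) n :=
    fun i => PathsFactorAux.split_length (G := G) w i
  have hinj : Function.Injective f := by
    intro i j hij
    have h1 := hlen i
    have h2 := hlen j
    rw [hij] at h1
    rw [h2] at h1
    have hi : (i : ℕ) ≤ n := by omega
    have hj : (j : ℕ) ≤ n := by omega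
    rw [min_eq_left hj, min_eq_left hi] at h1
    exact Fin.ext h1.symm
  have hset : { t : Σ (X : Paths G), (A ⟶ X) × (X ⟶ B) | t.2.1 ≫ t.2.2 = w }
      = Set.range f := by
    ext ⟨X, u, v⟩
    constructor
    · rintro (h : Quiver.Path.comp u v = w)
      have hul : Quiver.Path.length u ≤ n := by
        rw [hn, ← h]; exact le_of_le_of_eq (Nat.le_add_right _ _) (Quiver.Path.length_comp u v).symm
      have key : PathsFactorAux.split (G := G) w (Quiver.Path.length u)
          = ⟨X, u, v⟩ := by
        rw [← h]
        exact PathsFactorAux.split_spec u v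
      exact ⟨⟨Quiver.Path.length u, by omega⟩, key⟩
    · rintro ⟨i, hi⟩
      rw [Set.mem_setOf_eq, ← hi]
      exact PathsFactorAux.split_comp (G := G) w i
  rw [hset]
  refine ⟨Set.finite_range f, ?_⟩
  rw [Nat.card_range_of_injective hinj]
  simp
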